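/- Let P : V* → V be a skew linear map and Σ ⊆ V* a subspace. Then E_P = {(Pσ, σ) : σ ∈ Σ} is an isotropic subspace of V × V*, and its g-orthogonal complement is E_P^⊥ = {(Pβ + Y, β) : β ∈ V*, Y ∈ ann_V Σ}, where ann_V Σ = {v ∈ V : σ(v) = 0 for all σ ∈ Σ}. -/

import Mathlib

open Module LinearMap

/-- The pairing metric `g((X,α),(Y,β)) = (1/2)(α(Y) + β(X))` on `V × V*`. -/
noncomputable def bigG (V : Type*) [AddCommGroup V] [Module ℝ V] :
    LinearMap.BilinForm ℝ (V × Module.Dual ℝ V) :=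
  LinearMap.mk₂ ℝ (fun p q => (1 / 2 : ℝ) * (p.2 q.1 + q.2 p.1))
    (fun p p' q => by simp; ring)
    (fun c p q => by simp; ring)
    (fun p q q' => by simp; ring)
    (fun c p q => by simp; ring)

/-- The `g`-orthogonal complement of a subspace of `V × V*`. -/
noncomputable def gOrth {V : Type*} [AddCommGroup V] [Module ℝ V]
    (E : Submodule ℝ (V × Module.Dual ℝ V)) : Submodule ℝ (V × Module.Dual ℝ V) :=
  LinearMap.BilinForm.orthogonal (bigG V) E

/-- The graph `E_P = {(Pσ, σ) : σ ∈ Σ}` of a skew map `P : V* → V` over `Σ ⊆ V*`. -/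
noncomputable def graphOn {V : Type*} [AddCommGroup V] [Module ℝ V]
    (P : Module.Dual ℝ V →ₗ[ℝ] V) (Sgm : Submodule ℝ (Module.Dual ℝ V)) :
    Submodule ℝ (V × Module.Dual ℝ V) :=
  Submodule.map (P.prod LinearMap.id) Sgm

/-- For a skew `P : V* → V` and `Σ ⊆ V*`, the graph `E_P = {(Pσ,σ) : σ ∈ Σ}` is isotropic
and `E_P^⊥ = {(Pβ + Y, β) : β ∈ V*, Y ∈ ann_V Σ}`. -/
theorem stmt7 (V : Type*) [AddCommGroup V] [Module ℝ V] [FiniteDimensional ℝ V]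
    (P : Dual ℝ V →ₗ[ℝ] V)
    (hP : ∀ α β : Dual ℝ V, β (P α) = -α (P β))
    (Sgm : Submodule ℝ (Dual ℝ V)) :
    (∀ p ∈ graphOn P Sgm, ∀ q ∈ graphOn P Sgm, bigG V p q = 0) ∧
    (gOrth (graphOn P Sgm) : Set (V × Dual ℝ V)) =
      {q : V × Dual ℝ V | ∃ β : Dual ℝ V, ∃ Y ∈ Sgm.dualCoannihilator, q = (P β + Y, β)} := by
  constructor
  · rintro p ⟨σ, hσ, rfl⟩ q ⟨τ, hτ, rfl⟩
    simp [bigG, hP σ τ]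
  · ext q
    simp only [SetLike.mem_coe, Set.mem_setOf_eq, gOrth,
      LinearMap.BilinForm.mem_orthogonal_iff]
    constructor
    · intro h
      refine ⟨q.2, q.1 - P q.2, ?_, by simp⟩
      rw [Submodule.mem_dualCoannihilator]
      intro σ hσ
      have := h (P σ, σ) ⟨σ, hσ, rfl⟩
      simp only [LinearMap.BilinForm.IsOrtho, bigG, LinearMap.mk₂_apply] at this
      have h2 : σ q.1 + q.2 (P σ) = 0 := by
        rcases mul_eq_zero.1 this with h' | h'
        · norm_num at h'
        · exact h'
      rw [hP σ q.2] at h2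
      simp only [map_sub]
      linarith
    · rintro ⟨β, Y, hY, rfl⟩ p ⟨σ, hσ, rfl⟩
      rw [Submodule.mem_dualCoannihilator] at hY
      simp only [LinearMap.BilinForm.IsOrtho, bigG, LinearMap.mk₂_apply,
        LinearMap.prod_apply, Function.prod, LinearMap.id_coe, id_eq, map_add]
      rw [hP σ β, hY σ hσ]
      ring
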